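/- arXiv:2004.03920 — 4 statements merged into one kernel-verified Lean document; each statement's English description precedes it below -/
import Mathlib

section
/- Fix a real number λ ≠ 0. For all integers n, k with n ≥ k ≥ 0, the Jindalrae–Stirling number of the second kind satisfies S^{(2)}_{J,λ}(n,k) = Σ_{m=k}^{n} S_{2,λ}(n,m) S_{2,λ}(m,k). -/
open Finset

/-- The degenerate falling factorial `(x)_{n,λ} = x(x−λ)⋯(x−(n−1)λ)`;
for `lam = 1` it is the ordinary falling factorial `(x)_n`. -/
noncomputable def dff (lam : ℝ) (n : ℕ) (x : ℝ) : ℝ :=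
  ∏ i ∈ Finset.range n, (x - i * lam)

/-- The degenerate exponential `e_λ^x(t) = Σ_{n≥0} (x)_{n,λ} t^n/n!`. -/
noncomputable def degExp (lam x : ℝ) : PowerSeries ℝ :=
  PowerSeries.mk fun n => dff lam n x / n.factorial

/-- The degenerate logarithm `log_λ(1+t) = Σ_{n≥1} λ^{n−1}(1)_{n,1/λ} t^n/n!`. -/
noncomputable def degLog (lam : ℝ) : PowerSeries ℝ :=
  PowerSeries.mk fun n =>
    if n = 0 then 0 else lam ^ (n - 1) * dff (1 / lam) n 1 / n.factorial

/-- Composition `f(g(t))` of formal power series (valid definition of composition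
when `g` has zero constant term, as in all uses below). -/
noncomputable def pscomp (f g : PowerSeries ℝ) : PowerSeries ℝ :=
  PowerSeries.mk fun n =>
    ∑ k ∈ Finset.range (n + 1), (PowerSeries.coeff k f) * (PowerSeries.coeff n (g ^ k))

/-! ### Auxiliary lemmas -/

lemma dff_zero' (lam x : ℝ) : dff lam 0 x = 1 := by simp [dff]

lemma dff_succ' (lam x : ℝ) (n : ℕ) : dff lam (n+1) x = dff lam n x * (x - n * lam) := by
  simp [dff, Finset.prod_range_succ]

lemma dff_zero_left' (lam : ℝ) (n : ℕ) (hn : n ≠ 0) : dff lam n 0 = 0 := by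
  have h0 : (0:ℕ) ∈ Finset.range n := Finset.mem_range.mpr (Nat.pos_of_ne_zero hn)
  refine Finset.prod_eq_zero h0 ?_
  simp

lemma dff_cast' (j m : ℕ) : dff 1 j (m : ℝ) = (j.factorial : ℝ) * (m.choose j) := by
  rcases le_or_gt j m with h | h
  · have : dff 1 j (m:ℝ) = ((m.descFactorial j : ℕ) : ℝ) := by
      rw [Nat.descFactorial_eq_prod_range, Nat.cast_prod, dff]
      refine Finset.prod_congr rfl fun i hi => ?_
      rw [Finset.mem_range] at hi
      rw [Nat.cast_sub (le_trans (le_of_lt hi) h)]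
      ring
    rw [this, Nat.descFactorial_eq_factorial_mul_choose]
    push_cast; ring
  · rw [Nat.choose_eq_zero_of_lt h]
    have hm : m ∈ Finset.range j := Finset.mem_range.mpr h
    simp [dff, Finset.prod_eq_zero hm]

lemma dff_add' (lam x y : ℝ) : ∀ n : ℕ,
    dff lam n (x + y) = ∑ j ∈ range (n+1), (n.choose j : ℝ) * dff lam j x * dff lam (n-j) y := by
  intro n
  induction n with
  | zero => simp [dff_zero']
  | succ n ih =>
    rw [dff_succ', ih, Finset.sum_mul]
    have key : ∀ j ∈ range (n+1),
        (n.choose j : ℝ) * dff lam j x * dff lam (n-j) y * (x + y - n*lam)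
        = ((n.choose j : ℝ) * (dff lam (j+1) x * dff lam (n+1-(j+1)) y))
          + ((n.choose j : ℝ) * (dff lam j x * dff lam (n+1-j) y)) := by
      intro j hj
      rw [Finset.mem_range, Nat.lt_succ_iff] at hj
      have h1 : n + 1 - (j+1) = n - j := by omega
      have h2 : n + 1 - j = (n - j) + 1 := by omega
      have hc : ((n-j : ℕ) : ℝ) = (n : ℝ) - j := by rw [Nat.cast_sub hj]
      rw [h1, h2, dff_succ', dff_succ', hc]
      ring
    rw [Finset.sum_congr rfl key, Finset.sum_add_distrib]
    rw [Finset.sum_range_succ' (fun j => ((n+1).choose j : ℝ) * dff lam j x * dff lam (n+1-j) y) (n+1)]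
    have hPascal : ∀ i ∈ range (n+1),
        (((n+1).choose (i+1) : ℕ) : ℝ) * dff lam (i+1) x * dff lam (n+1-(i+1)) y
        = (n.choose i : ℝ) * (dff lam (i+1) x * dff lam (n+1-(i+1)) y)
          + (n.choose (i+1) : ℝ) * (dff lam (i+1) x * dff lam (n+1-(i+1)) y) := by
      intro i hi
      rw [Nat.choose_succ_succ]
      push_cast; ring
    rw [Finset.sum_congr rfl hPascal, Finset.sum_add_distrib]
    have hB2 : ∑ j ∈ range (n+1), (n.choose j : ℝ) * (dff lam j x * dff lam (n+1-j) y)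
        = ∑ i ∈ range (n+1), (n.choose (i+1) : ℝ) * (dff lam (i+1) x * dff lam (n+1-(i+1)) y)
          + ((n+1).choose 0 : ℝ) * dff lam 0 x * dff lam (n+1-0) y := by
      have h := Finset.sum_range_succ' (fun j => (n.choose j : ℝ) * (dff lam j x * dff lam (n+1-j) y)) (n+1)
      rw [Finset.sum_range_succ] at h
      simp only [Nat.choose_succ_self, Nat.cast_zero, zero_mul, add_zero] at h
      rw [h]
      simp [dff_zero']
    rw [hB2]
    ring

lemma coeff_pow_lt' (g : PowerSeries ℝ) (hg : PowerSeries.constantCoeff g = 0) :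
    ∀ (k : ℕ) {n : ℕ}, n < k → PowerSeries.coeff n (g ^ k) = 0 := by
  intro k
  induction k with
  | zero => intro n h; omega
  | succ k ih =>
    intro n h
    rw [pow_succ, PowerSeries.coeff_mul]
    refine Finset.sum_eq_zero fun p hp => ?_
    rw [Finset.HasAntidiagonal.mem_antidiagonal] at hp
    rcases Nat.eq_zero_or_pos p.2 with h2 | h2
    · have : PowerSeries.coeff p.2 g = 0 := by
        rw [h2]; simpa [PowerSeries.coeff_zero_eq_constantCoeff] using hg
      rw [this, mul_zero]
    · have : p.1 < k := by omega
      rw [ih this, zero_mul]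

lemma coeff_degExp_pow' (lam : ℝ) (N n : ℕ) :
    PowerSeries.coeff n ((degExp lam 1) ^ N) = dff lam n (N : ℝ) / n.factorial := by
  induction N generalizing n with
  | zero =>
    rw [pow_zero, PowerSeries.coeff_one]
    rcases Nat.eq_zero_or_pos n with h | h
    · simp [h, dff_zero']
    · rw [if_neg (by omega), Nat.cast_zero, dff_zero_left' lam n (by omega), zero_div]
  | succ N ih =>
    rw [pow_succ, PowerSeries.coeff_mul, Finset.Nat.sum_antidiagonal_eq_sum_range_succ_mk]
    have step : ∀ j ∈ range (n+1),
        PowerSeries.coeff j ((degExp lam 1)^N) * PowerSeries.coeff (n-j) (degExp lam 1)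
        = (n.choose j : ℝ) * dff lam j N * dff lam (n-j) 1 / n.factorial := by
      intro j hj
      rw [Finset.mem_range, Nat.lt_succ_iff] at hj
      rw [ih, degExp, PowerSeries.coeff_mk, Nat.cast_choose ℝ hj]
      have h1 : (j.factorial : ℝ) ≠ 0 := Nat.cast_ne_zero.mpr (Nat.factorial_ne_zero j)
      have h2 : ((n-j).factorial : ℝ) ≠ 0 := Nat.cast_ne_zero.mpr (Nat.factorial_ne_zero _)
      have h3 : (n.factorial : ℝ) ≠ 0 := Nat.cast_ne_zero.mpr (Nat.factorial_ne_zero n)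
      field_simp
    rw [Finset.sum_congr rfl step]
    have hc : ((N + 1 : ℕ) : ℝ) = (N : ℝ) + 1 := by push_cast; ring
    rw [hc, dff_add', Finset.sum_div]

lemma constantCoeff_E' (lam : ℝ) :
    PowerSeries.constantCoeff (degExp lam 1 - 1) = 0 := by
  rw [map_sub, PowerSeries.constantCoeff_one]
  have : PowerSeries.constantCoeff (degExp lam 1) = dff lam 0 1 / (Nat.factorial 0) := by
    rw [← PowerSeries.coeff_zero_eq_constantCoeff, degExp, PowerSeries.coeff_mk]
  rw [this, dff_zero']
  norm_num

/-- binomial expansion giving the EGF-style identity at natural arguments -/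
lemma binom_key' (lam : ℝ) (N n : ℕ) :
    dff lam n (N : ℝ) / n.factorial
      = ∑ k ∈ range (n+1), (dff 1 k (N : ℝ) / k.factorial)
          * PowerSeries.coeff n ((degExp lam 1 - 1) ^ k) := by
  set E := degExp lam 1 - 1 with hE
  have hF : degExp lam 1 = E + 1 := by rw [hE, sub_add_cancel]
  have hpow : (degExp lam 1) ^ N = ∑ k ∈ range (N+1), E ^ k * 1 ^ (N - k) * ((N.choose k : ℕ) : PowerSeries ℝ) := by
    rw [hF, add_pow]
  have h1 := coeff_degExp_pow' lam N n
  rw [hpow, map_sum] at h1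
  have h2 : ∀ k ∈ range (N+1),
      PowerSeries.coeff n (E ^ k * 1 ^ (N-k) * ((N.choose k : ℕ) : PowerSeries ℝ))
      = (N.choose k : ℝ) * PowerSeries.coeff n (E ^ k) := by
    intro k _
    rw [one_pow, mul_one, mul_comm]
    have : ((N.choose k : ℕ) : PowerSeries ℝ) = PowerSeries.C ((N.choose k : ℕ) : ℝ) := by
      simp
    rw [this, PowerSeries.coeff_C_mul]
  rw [Finset.sum_congr rfl h2] at h1
  -- h1 : dff lam n N / n! = ∑_{k ∈ range (N+1)} C(N,k) * coeff_n (E^k)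
  have hvan : ∀ k, n < k ∨ N < k → (N.choose k : ℝ) * PowerSeries.coeff n (E ^ k) = 0 := by
    intro k hk
    rcases hk with hk | hk
    · rw [coeff_pow_lt' E (constantCoeff_E' lam) k hk, mul_zero]
    · rw [Nat.choose_eq_zero_of_lt hk, Nat.cast_zero, zero_mul]
  have hsub1 : ∑ k ∈ range (N+1), (N.choose k : ℝ) * PowerSeries.coeff n (E ^ k)
      = ∑ k ∈ range (N+n+2), (N.choose k : ℝ) * PowerSeries.coeff n (E ^ k) := by
    refine Finset.sum_subset (Finset.range_subset_range.mpr (by omega)) fun x _ hx => ?_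
    rw [Finset.mem_range, not_lt] at hx
    exact hvan x (Or.inr (by omega))
  have hsub2 : ∑ k ∈ range (n+1), (N.choose k : ℝ) * PowerSeries.coeff n (E ^ k)
      = ∑ k ∈ range (N+n+2), (N.choose k : ℝ) * PowerSeries.coeff n (E ^ k) := by
    refine Finset.sum_subset (Finset.range_subset_range.mpr (by omega)) fun x _ hx => ?_
    rw [Finset.mem_range, not_lt] at hx
    exact hvan x (Or.inl (by omega))
  rw [← h1, hsub1, ← hsub2]
  refine Finset.sum_congr rfl fun k _ => ?_
  rw [dff_cast']
  have hk : (k.factorial : ℝ) ≠ 0 := Nat.cast_ne_zero.mpr (Nat.factorial_ne_zero k)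
  field_simp

/-- linear independence of falling factorials via evaluation at naturals -/
lemma ffu' (n : ℕ) (c : ℕ → ℝ)
    (h : ∀ m : ℕ, ∑ k ∈ range (n+1), c k * dff 1 k (m:ℝ) = 0) :
    ∀ k, k ≤ n → c k = 0 := by
  intro k
  induction k using Nat.strong_induction_on with
  | _ k ih =>
    intro hk
    have h2 := h k
    rw [Finset.sum_eq_single k (fun j hj hne => ?_) (fun habs => absurd (Finset.mem_range.mpr (by omega)) habs)] at h2
    · rw [dff_cast', Nat.choose_self] at h2
      have hfk : (k.factorial : ℝ) ≠ 0 := Nat.cast_ne_zero.mpr (Nat.factorial_ne_zero k)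
      have : c k * (k.factorial : ℝ) = 0 := by rw [← h2]; push_cast; ring
      exact (mul_eq_zero.mp this).resolve_right hfk
    · rcases lt_or_gt_of_ne hne with hlt | hgt
      · rw [ih j hlt (by omega), zero_mul]
      · rw [dff_cast', Nat.choose_eq_zero_of_lt hgt]
        push_cast; ring

/-- coefficients of powers of `E = degExp lam 1 - 1` in terms of `S2` -/
lemma claimA' (lam : ℝ) (S2 : ℕ → ℕ → ℝ)
    (hS2 : ∀ (n : ℕ) (x : ℝ), dff lam n x = ∑ k ∈ Finset.range (n + 1), S2 n k * dff 1 k x)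
    (n k : ℕ) (hk : k ≤ n) :
    PowerSeries.coeff n ((degExp lam 1 - 1) ^ k)
      = (k.factorial : ℝ) * S2 n k / n.factorial := by
  have key : ∀ j, j ≤ n → S2 n j / n.factorial
      - PowerSeries.coeff n ((degExp lam 1 - 1) ^ j) / j.factorial = 0 := by
    refine ffu' n _ (fun m => ?_)
    have e1 : ∑ j ∈ range (n+1), (S2 n j / (n.factorial:ℝ)) * dff 1 j (m:ℝ)
        = dff lam n (m:ℝ) / n.factorial := by
      rw [hS2 n (m:ℝ), Finset.sum_div]
      exact Finset.sum_congr rfl fun j _ => by ring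
    have e2 := binom_key' lam m n
    calc ∑ j ∈ range (n+1), (S2 n j / (n.factorial:ℝ)
            - PowerSeries.coeff n ((degExp lam 1 - 1) ^ j) / j.factorial) * dff 1 j (m:ℝ)
        = ∑ j ∈ range (n+1), ((S2 n j / (n.factorial:ℝ)) * dff 1 j (m:ℝ)
            - (dff 1 j (m:ℝ) / j.factorial) * PowerSeries.coeff n ((degExp lam 1 - 1) ^ j)) := by
          exact Finset.sum_congr rfl fun j _ => by ring
      _ = 0 := by rw [Finset.sum_sub_distrib, e1, ← e2, sub_self]
  have h := key k hk
  have hfk : (k.factorial : ℝ) ≠ 0 := Nat.cast_ne_zero.mpr (Nat.factorial_ne_zero k)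
  have hfn : (n.factorial : ℝ) ≠ 0 := Nat.cast_ne_zero.mpr (Nat.factorial_ne_zero n)
  have := sub_eq_zero.mp h
  field_simp at this ⊢
  linarith [this]

lemma coeff_pscomp' (f g : PowerSeries ℝ) (n : ℕ) :
    PowerSeries.coeff n (pscomp f g)
      = ∑ k ∈ range (n+1), (PowerSeries.coeff k f) * (PowerSeries.coeff n (g ^ k)) := by
  rw [pscomp, PowerSeries.coeff_mk]

lemma pscomp_one' (g : PowerSeries ℝ) : pscomp 1 g = 1 := by
  ext n
  rw [coeff_pscomp', Finset.sum_eq_single 0 (fun j hj hne => by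
    rw [PowerSeries.coeff_one, if_neg hne, zero_mul]) (fun habs => absurd (Finset.mem_range.mpr (by omega)) habs)]
  simp

lemma pscomp_add' (f₁ f₂ g : PowerSeries ℝ) :
    pscomp (f₁ + f₂) g = pscomp f₁ g + pscomp f₂ g := by
  ext n
  rw [map_add, coeff_pscomp', coeff_pscomp', coeff_pscomp', ← Finset.sum_add_distrib]
  exact Finset.sum_congr rfl fun k _ => by rw [map_add, add_mul]

lemma tri_sum' (n : ℕ) (t : ℕ × ℕ → ℝ) (ht : ∀ p : ℕ × ℕ, n < p.1 + p.2 → t p = 0) :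
    ∑ c ∈ range (n+1), ∑ p ∈ Finset.HasAntidiagonal.antidiagonal c, t p
      = ∑ a ∈ range (n+1), ∑ b ∈ range (n+1), t (a, b) := by
  have hdisj : (↑(range (n+1)) : Set ℕ).PairwiseDisjoint (fun c => Finset.HasAntidiagonal.antidiagonal c) := by
    intro c _ c' _ hne
    simp only [Finset.disjoint_left]
    intro p hp hp'
    rw [Finset.HasAntidiagonal.mem_antidiagonal] at hp hp'
    exact hne (hp ▸ hp')
  rw [← Finset.sum_biUnion hdisj, ← Finset.sum_product']
  refine Finset.sum_subset ?_ ?_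
  · intro p hp
    rw [Finset.mem_biUnion] at hp
    obtain ⟨c, hc, hpc⟩ := hp
    rw [Finset.mem_range] at hc
    rw [Finset.HasAntidiagonal.mem_antidiagonal] at hpc
    rw [Finset.mem_product, Finset.mem_range, Finset.mem_range]
    omega
  · intro p hp hnp
    refine ht p ?_
    by_contra hle
    rw [not_lt] at hle
    exact hnp (Finset.mem_biUnion.mpr ⟨p.1 + p.2, Finset.mem_range.mpr (by omega), Finset.HasAntidiagonal.mem_antidiagonal.mpr rfl⟩)

lemma pscomp_mul' (f₁ f₂ g : PowerSeries ℝ) (hg : PowerSeries.constantCoeff g = 0) :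
    pscomp (f₁ * f₂) g = pscomp f₁ g * pscomp f₂ g := by
  ext n
  rw [PowerSeries.coeff_mul, coeff_pscomp']
  have hext : ∀ p ∈ Finset.HasAntidiagonal.antidiagonal n,
      PowerSeries.coeff p.1 (pscomp f₁ g) * PowerSeries.coeff p.2 (pscomp f₂ g)
      = ∑ a ∈ range (n+1), ∑ b ∈ range (n+1),
          (PowerSeries.coeff a f₁ * PowerSeries.coeff p.1 (g^a))
            * (PowerSeries.coeff b f₂ * PowerSeries.coeff p.2 (g^b)) := by
    intro p hp
    rw [Finset.HasAntidiagonal.mem_antidiagonal] at hp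
    rw [coeff_pscomp', coeff_pscomp']
    have h1 : ∑ a ∈ range (p.1+1), PowerSeries.coeff a f₁ * PowerSeries.coeff p.1 (g^a)
        = ∑ a ∈ range (n+1), PowerSeries.coeff a f₁ * PowerSeries.coeff p.1 (g^a) := by
      refine Finset.sum_subset (Finset.range_subset_range.mpr (by omega)) fun a _ ha => ?_
      rw [Finset.mem_range, not_lt] at ha
      rw [coeff_pow_lt' g hg a (by omega), mul_zero]
    have h2 : ∑ b ∈ range (p.2+1), PowerSeries.coeff b f₂ * PowerSeries.coeff p.2 (g^b)
        = ∑ b ∈ range (n+1), PowerSeries.coeff b f₂ * PowerSeries.coeff p.2 (g^b) := by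
      refine Finset.sum_subset (Finset.range_subset_range.mpr (by omega)) fun b _ hb => ?_
      rw [Finset.mem_range, not_lt] at hb
      rw [coeff_pow_lt' g hg b (by omega), mul_zero]
    rw [h1, h2, Finset.sum_mul_sum]
  rw [Finset.sum_congr rfl hext, Finset.sum_comm]
  have hswap : ∀ a ∈ range (n+1),
      ∑ p ∈ Finset.HasAntidiagonal.antidiagonal n, ∑ b ∈ range (n+1),
        (PowerSeries.coeff a f₁ * PowerSeries.coeff p.1 (g^a))
          * (PowerSeries.coeff b f₂ * PowerSeries.coeff p.2 (g^b))
      = ∑ b ∈ range (n+1), (PowerSeries.coeff a f₁ * PowerSeries.coeff b f₂)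
          * PowerSeries.coeff n (g ^ (a + b)) := by
    intro a _
    rw [Finset.sum_comm]
    refine Finset.sum_congr rfl fun b _ => ?_
    rw [pow_add, PowerSeries.coeff_mul, Finset.mul_sum]
    exact Finset.sum_congr rfl fun p _ => by ring
  rw [Finset.sum_congr rfl hswap]
  -- LHS: ∑_{c∈range(n+1)} coeff_c (f₁ f₂) * coeff_n (g^c)
  have hlhs : ∀ c ∈ range (n+1),
      PowerSeries.coeff c (f₁ * f₂) * PowerSeries.coeff n (g ^ c)
      = ∑ p ∈ Finset.HasAntidiagonal.antidiagonal c,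
          (PowerSeries.coeff p.1 f₁ * PowerSeries.coeff p.2 f₂)
            * PowerSeries.coeff n (g ^ (p.1 + p.2)) := by
    intro c _
    rw [PowerSeries.coeff_mul, Finset.sum_mul]
    refine Finset.sum_congr rfl fun p hp => ?_
    rw [Finset.HasAntidiagonal.mem_antidiagonal] at hp
    rw [hp]
  rw [Finset.sum_congr rfl hlhs]
  exact tri_sum' n (fun p => (PowerSeries.coeff p.1 f₁ * PowerSeries.coeff p.2 f₂)
      * PowerSeries.coeff n (g ^ (p.1 + p.2)))
    (fun p hp => by simp only [coeff_pow_lt' g hg _ hp, mul_zero])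

lemma pscomp_pow' (f g : PowerSeries ℝ) (hg : PowerSeries.constantCoeff g = 0) (k : ℕ) :
    pscomp (f ^ k) g = (pscomp f g) ^ k := by
  induction k with
  | zero => rw [pow_zero, pow_zero, pscomp_one']
  | succ k ih => rw [pow_succ, pow_succ, pscomp_mul' _ _ _ hg, ih]

theorem jindalrae_stirling_second_kind (lam : ℝ) (hlam : lam ≠ 0)
    (S2 SJ2 : ℕ → ℕ → ℝ)
    (hS2 : ∀ (n : ℕ) (x : ℝ), dff lam n x = ∑ k ∈ Finset.range (n + 1), S2 n k * dff 1 k x)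
    (hSJ2 : ∀ k : ℕ, (PowerSeries.C ((k.factorial : ℝ))⁻¹) * (pscomp (degExp lam 1) (degExp lam 1 - 1) - 1) ^ k = PowerSeries.mk (fun n => if k ≤ n then SJ2 n k / n.factorial else 0))
    : ∀ n k : ℕ, k ≤ n → SJ2 n k = ∑ m ∈ Finset.Icc k n, S2 n m * S2 m k := by
  intro n k hkn
  set E := degExp lam 1 - 1 with hEdef
  have hE0 : PowerSeries.constantCoeff E = 0 := constantCoeff_E' lam
  have hH : pscomp (degExp lam 1) E - 1 = pscomp E E := by
    have : degExp lam 1 = E + 1 := by rw [hEdef, sub_add_cancel]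
    rw [this, pscomp_add', pscomp_one', add_sub_cancel_right]
  have hco := congrArg (fun φ => PowerSeries.coeff n φ) (hSJ2 k)
  rw [PowerSeries.coeff_C_mul, hH, ← pscomp_pow' E E hE0 k, coeff_pscomp',
    PowerSeries.coeff_mk, if_pos hkn] at hco
  -- restrict the sum to Icc k n
  have hres : ∑ m ∈ range (n+1), PowerSeries.coeff m (E ^ k) * PowerSeries.coeff n (E ^ m)
      = ∑ m ∈ Finset.Icc k n, PowerSeries.coeff m (E ^ k) * PowerSeries.coeff n (E ^ m) := by
    symm
    refine Finset.sum_subset (fun m hm => Finset.mem_range.mpr (by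
      rw [Finset.mem_Icc] at hm; omega)) fun m hm hnm => ?_
    rw [Finset.mem_range] at hm
    rw [Finset.mem_Icc, not_and_or, not_le, not_le] at hnm
    have hml : m < k := by omega
    rw [coeff_pow_lt' E hE0 k hml, zero_mul]
  rw [hres] at hco
  have hval : ∀ m ∈ Finset.Icc k n,
      PowerSeries.coeff m (E ^ k) * PowerSeries.coeff n (E ^ m)
      = (k.factorial : ℝ) * (S2 n m * S2 m k) / n.factorial := by
    intro m hm
    rw [Finset.mem_Icc] at hm
    rw [claimA' lam S2 hS2 m k hm.1, claimA' lam S2 hS2 n m hm.2]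
    have h1 : (m.factorial : ℝ) ≠ 0 := Nat.cast_ne_zero.mpr (Nat.factorial_ne_zero m)
    field_simp
  rw [Finset.sum_congr rfl hval] at hco
  have hfk : (k.factorial : ℝ) ≠ 0 := Nat.cast_ne_zero.mpr (Nat.factorial_ne_zero k)
  have hfn : (n.factorial : ℝ) ≠ 0 := Nat.cast_ne_zero.mpr (Nat.factorial_ne_zero n)
  have hsum : ∑ m ∈ Finset.Icc k n, (k.factorial : ℝ) * (S2 n m * S2 m k) / n.factorial
      = (k.factorial : ℝ) / n.factorial * ∑ m ∈ Finset.Icc k n, S2 n m * S2 m k := by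
    rw [Finset.mul_sum]
    exact Finset.sum_congr rfl fun m _ => by ring
  rw [hsum] at hco
  have : SJ2 n k / n.factorial = (∑ m ∈ Finset.Icc k n, S2 n m * S2 m k) / n.factorial := by
    rw [← hco]; field_simp
  field_simp at this
  linarith [this]
end

section
/- Fix a real number λ ≠ 0. For all integers n, k with n ≥ k ≥ 0, the Jindalrae–Stirling number of the first kind satisfies S^{(1)}_{J,λ}(n,k) = Σ_{m=k}^{n} S_{1,λ}(n,m) S_{1,λ}(m,k). -/
open Finset

namespace JS

lemma dff_succ (lam : ℝ) (n : ℕ) (x : ℝ) :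
    dff lam (n+1) x = dff lam n x * (x - n * lam) := by
  simp [dff, Finset.prod_range_succ]

lemma dff_zero (lam x : ℝ) : dff lam 0 x = 1 := by simp [dff]

noncomputable def dffP (lam : ℝ) (n : ℕ) : Polynomial ℝ :=
  ∏ i ∈ Finset.range n, (Polynomial.X - Polynomial.C (i * lam))

lemma dffP_eval (lam : ℝ) (n : ℕ) (x : ℝ) : (dffP lam n).eval x = dff lam n x := by
  simp [dffP, dff, Polynomial.eval_prod]

lemma dffP_monic (lam : ℝ) (n : ℕ) : (dffP lam n).Monic :=
  Polynomial.monic_prod_of_monic _ _ fun i _ => Polynomial.monic_X_sub_C _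

lemma dffP_natDegree (lam : ℝ) (n : ℕ) : (dffP lam n).natDegree = n := by
  rw [dffP, Polynomial.natDegree_prod]
  · simp only [Polynomial.natDegree_X_sub_C, Finset.sum_const, smul_eq_mul, mul_one, Finset.card_range]
  · intro i _; exact Polynomial.X_sub_C_ne_zero _

lemma ff_vandermonde (n : ℕ) (a b : ℝ) :
    dff 1 n (a + b) = ∑ k ∈ range (n+1), (n.choose k : ℝ) * (dff 1 k a * dff 1 (n-k) b) := by
  induction n with
  | zero => simp [dff]
  | succ n ih =>
    have hsplit : ∀ k ∈ range (n+1), (n.choose k : ℝ) * (dff 1 k a * dff 1 (n-k) b) * ((a + b) - n * 1)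
        = (n.choose k : ℝ) * (dff 1 (k+1) a * dff 1 (n-k) b)
          + (n.choose k : ℝ) * (dff 1 k a * dff 1 (n-k+1) b) := by
      intro k hk
      have hk' : k ≤ n := by simpa [Nat.lt_succ_iff] using hk
      have hcast : ((n - k : ℕ) : ℝ) = (n : ℝ) - k := by
        rw [Nat.cast_sub hk']
      rw [dff_succ, dff_succ]
      have : (a + b) - (n : ℝ) * 1 = (a - k * 1) + (b - ((n - k : ℕ) : ℝ) * 1) := by
        rw [hcast]; ring
      rw [this]; ring
    have step : dff 1 (n+1) (a+b)
        = (∑ k ∈ range (n+1), (n.choose k : ℝ) * (dff 1 (k+1) a * dff 1 (n-k) b))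
          + (∑ k ∈ range (n+1), (n.choose k : ℝ) * (dff 1 k a * dff 1 (n-k+1) b)) := by
      rw [dff_succ, ih, Finset.sum_mul, ← Finset.sum_add_distrib]
      exact Finset.sum_congr rfl hsplit
    rw [step]
    -- now massage the RHS of the goal
    rw [Finset.sum_range_succ' (fun k => ((n+1).choose k : ℝ) * (dff 1 k a * dff 1 (n+1-k) b)) (n+1)]
    have h0 : (((n+1).choose 0 : ℕ) : ℝ) * (dff 1 0 a * dff 1 (n+1-0) b) = dff 1 (n+1) b := by
      simp [dff_zero]
    rw [h0]
    have hpascal : ∀ k ∈ range (n+1), (((n+1).choose (k+1) : ℕ) : ℝ) * (dff 1 (k+1) a * dff 1 (n+1-(k+1)) b)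
        = (n.choose k : ℝ) * (dff 1 (k+1) a * dff 1 (n-k) b)
          + (n.choose (k+1) : ℝ) * (dff 1 (k+1) a * dff 1 (n-k) b) := by
      intro k hk
      have : (n+1).choose (k+1) = n.choose k + n.choose (k+1) := Nat.choose_succ_succ n k
      rw [this]
      have : n + 1 - (k+1) = n - k := by omega
      rw [this]
      push_cast
      ring
    rw [Finset.sum_congr rfl hpascal, Finset.sum_add_distrib]
    -- remains: S2 = ∑ choose(n,k+1) f(k+1) g(n-k) + f0 g(n+1)
    have hS2 : (∑ k ∈ range (n+1), (n.choose k : ℝ) * (dff 1 k a * dff 1 (n-k+1) b))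
        = (∑ k ∈ range (n+1), (n.choose (k+1) : ℝ) * (dff 1 (k+1) a * dff 1 (n-k) b)) + dff 1 (n+1) b := by
      rw [Finset.sum_range_succ' (fun k => (n.choose k : ℝ) * (dff 1 k a * dff 1 (n-k+1) b)) n]
      rw [Finset.sum_range_succ (fun k => (n.choose (k+1) : ℝ) * (dff 1 (k+1) a * dff 1 (n-k) b)) n]
      simp only [Nat.choose_succ_self, Nat.cast_zero, zero_mul, add_zero, Nat.choose_zero_right,
        Nat.cast_one, one_mul, dff_zero, Nat.sub_zero]
      congr 1
      apply Finset.sum_congr rfl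
      intro k hk
      have hk' : k < n := Finset.mem_range.mp hk
      have : n - (k+1) + 1 = n - k := by omega
      rw [this]
    rw [hS2]
    ring

noncomputable def B (a : ℝ) : PowerSeries ℝ :=
  PowerSeries.mk fun n => dff 1 n a / n.factorial

lemma coeff_B (a : ℝ) (n : ℕ) : PowerSeries.coeff n (B a) = dff 1 n a / n.factorial :=
  PowerSeries.coeff_mk _ _

lemma B_zero : B 0 = 1 := by
  ext n
  rw [coeff_B, PowerSeries.coeff_one]
  cases n with
  | zero => simp [dff_zero]
  | succ m =>
    have : dff 1 (m+1) 0 = 0 := by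
      simp [dff, Finset.prod_eq_zero (Finset.mem_range.mpr (Nat.succ_pos m))]
    simp [this]

lemma B_mul (a b : ℝ) : B a * B b = B (a + b) := by
  ext n
  rw [PowerSeries.coeff_mul, coeff_B, ff_vandermonde]
  rw [Finset.Nat.sum_antidiagonal_eq_sum_range_succ_mk]
  rw [Finset.sum_div]
  apply Finset.sum_congr rfl
  intro k hk
  have hk' : k ≤ n := by simpa [Nat.lt_succ_iff] using hk
  rw [coeff_B, coeff_B]
  have hfac : (n.factorial : ℝ) = (n.choose k : ℝ) * (k.factorial : ℝ) * ((n-k).factorial : ℝ) := by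
    rw [← Nat.cast_mul, ← Nat.cast_mul, Nat.choose_mul_factorial_mul_factorial hk']
  have h1 : (k.factorial : ℝ) ≠ 0 := Nat.cast_ne_zero.mpr k.factorial_ne_zero
  have h2 : ((n-k).factorial : ℝ) ≠ 0 := Nat.cast_ne_zero.mpr (n-k).factorial_ne_zero
  have h3 : (n.choose k : ℝ) ≠ 0 := Nat.cast_ne_zero.mpr (Nat.choose_pos hk').ne'
  field_simp [hfac]
  rw [hfac]; ring

lemma B_pow (b : ℝ) (N : ℕ) : B b ^ N = B (N * b) := by
  induction N with
  | zero => simp [B_zero]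
  | succ m ih =>
    rw [pow_succ, ih, B_mul]
    congr 1
    push_cast
    ring

lemma dff_nat (N n : ℕ) : dff 1 n (N : ℝ) = (N.descFactorial n : ℝ) := by
  induction n with
  | zero => simp [dff_zero]
  | succ m ih =>
    rw [dff_succ, ih, Nat.descFactorial_succ]
    by_cases h : m ≤ N
    · rw [Nat.cast_mul, Nat.cast_sub h]; ring
    · have : N.descFactorial m = 0 := by
        apply Nat.descFactorial_eq_zero_iff_lt.mpr; omega
      simp [this]

lemma coeff_one_add_X_pow (N n : ℕ) :
    PowerSeries.coeff n ((1 + PowerSeries.X : PowerSeries ℝ) ^ N) = (N.choose n : ℝ) := by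
  rw [add_comm, add_pow, map_sum]
  have h : ∀ k ∈ range (N+1),
      PowerSeries.coeff n (PowerSeries.X ^ k * 1 ^ (N - k) * (N.choose k : PowerSeries ℝ))
      = if n = k then (N.choose k : ℝ) else 0 := by
    intro k _
    rw [one_pow, mul_one, ← map_natCast (PowerSeries.C), PowerSeries.coeff_mul_C,
      PowerSeries.coeff_X_pow]
    split_ifs with h <;> simp
  rw [Finset.sum_congr rfl h, Finset.sum_ite_eq]
  split_ifs with h
  · rfl
  · have : N.choose n = 0 := Nat.choose_eq_zero_of_lt (by simpa [Nat.lt_succ_iff, not_lt] using h)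
    simp [this]

lemma B_nat (N : ℕ) : B (N : ℝ) = (1 + PowerSeries.X) ^ N := by
  ext n
  rw [coeff_B, dff_nat, coeff_one_add_X_pow, Nat.descFactorial_eq_factorial_mul_choose]
  push_cast
  have h1 : (n.factorial : ℝ) ≠ 0 := Nat.cast_ne_zero.mpr n.factorial_ne_zero
  field_simp

lemma coeff_pow_zero {g : PowerSeries ℝ} (hg : PowerSeries.constantCoeff g = 0)
    {n k : ℕ} (h : n < k) : PowerSeries.coeff n (g ^ k) = 0 := by
  induction k generalizing n with
  | zero => omega
  | succ m ih =>
    rw [pow_succ, PowerSeries.coeff_mul]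
    apply Finset.sum_eq_zero
    intro p hp
    rw [Finset.HasAntidiagonal.mem_antidiagonal] at hp
    rcases Nat.eq_zero_or_pos p.2 with h2 | h2
    · have : PowerSeries.coeff p.2 g = 0 := by
        rw [h2]; simpa [PowerSeries.coeff_zero_eq_constantCoeff] using hg
      rw [this, mul_zero]
    · have : p.1 < m := by omega
      rw [ih this, zero_mul]

lemma coeff_eval₂ {g : PowerSeries ℝ} (hg : PowerSeries.constantCoeff g = 0)
    (P : Polynomial ℝ) (n : ℕ) :
    PowerSeries.coeff n (Polynomial.eval₂ (PowerSeries.C) g P)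
      = ∑ k ∈ range (n+1), P.coeff k * PowerSeries.coeff n (g ^ k) := by
  rw [Polynomial.eval₂_eq_sum_range, map_sum]
  have hterm : ∀ k, PowerSeries.coeff n (PowerSeries.C (P.coeff k) * g ^ k)
      = P.coeff k * PowerSeries.coeff n (g ^ k) := fun k => PowerSeries.coeff_C_mul _ _ _
  simp only [hterm]
  set M := max (P.natDegree + 1) (n + 1) with hM
  rw [show (∑ k ∈ range (P.natDegree + 1), P.coeff k * PowerSeries.coeff n (g ^ k))
      = ∑ k ∈ range M, P.coeff k * PowerSeries.coeff n (g ^ k) from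
    (Finset.sum_subset (Finset.range_subset_range.mpr (le_max_left _ _)) (by
      intro k _ hk
      rw [Finset.mem_range, not_lt] at hk
      rw [Polynomial.coeff_eq_zero_of_natDegree_lt (by omega), zero_mul]))]
  rw [show (∑ k ∈ range (n + 1), P.coeff k * PowerSeries.coeff n (g ^ k))
      = ∑ k ∈ range M, P.coeff k * PowerSeries.coeff n (g ^ k) from
    (Finset.sum_subset (Finset.range_subset_range.mpr (le_max_right _ _)) (by
      intro k _ hk
      rw [Finset.mem_range, not_lt] at hk
      rw [coeff_pow_zero hg (by omega), mul_zero]))]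

lemma coeff_pscomp (f g : PowerSeries ℝ) (n : ℕ) :
    PowerSeries.coeff n (pscomp f g)
      = ∑ k ∈ range (n+1), PowerSeries.coeff k f * PowerSeries.coeff n (g ^ k) :=
  PowerSeries.coeff_mk _ _

lemma coeff_pscomp_eval₂ {g : PowerSeries ℝ} (hg : PowerSeries.constantCoeff g = 0)
    (f : PowerSeries ℝ) {p n : ℕ} (hpn : p ≤ n) :
    PowerSeries.coeff p (Polynomial.eval₂ (PowerSeries.C) g (PowerSeries.trunc (n+1) f))
      = PowerSeries.coeff p (pscomp f g) := by
  rw [coeff_eval₂ hg, coeff_pscomp]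
  apply Finset.sum_congr rfl
  intro k hk
  have hk' : k ≤ p := by simpa [Nat.lt_succ_iff] using hk
  rw [PowerSeries.coeff_trunc]
  rw [if_pos (by omega)]

lemma pscomp_mul {g : PowerSeries ℝ} (hg : PowerSeries.constantCoeff g = 0)
    (f1 f2 : PowerSeries ℝ) :
    pscomp (f1 * f2) g = pscomp f1 g * pscomp f2 g := by
  ext n
  rw [← coeff_pscomp_eval₂ hg (f1 * f2) (le_refl n)]
  have htr : PowerSeries.coeff n
      (Polynomial.eval₂ (PowerSeries.C) g (PowerSeries.trunc (n+1) (f1 * f2)))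
      = PowerSeries.coeff n
      (Polynomial.eval₂ (PowerSeries.C) g (PowerSeries.trunc (n+1) f1 * PowerSeries.trunc (n+1) f2)) := by
    rw [coeff_eval₂ hg, coeff_eval₂ hg]
    apply Finset.sum_congr rfl
    intro k hk
    have hk' : k ≤ n := by simpa [Nat.lt_succ_iff] using hk
    congr 1
    rw [PowerSeries.coeff_trunc, if_pos (by omega), PowerSeries.coeff_mul, Polynomial.coeff_mul]
    apply Finset.sum_congr rfl
    intro p hp
    rw [Finset.HasAntidiagonal.mem_antidiagonal] at hp
    rw [PowerSeries.coeff_trunc, PowerSeries.coeff_trunc, if_pos (by omega), if_pos (by omega)]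
  rw [htr, Polynomial.eval₂_mul, PowerSeries.coeff_mul, PowerSeries.coeff_mul]
  apply Finset.sum_congr rfl
  intro p hp
  rw [Finset.HasAntidiagonal.mem_antidiagonal] at hp
  rw [coeff_pscomp_eval₂ hg f1 (by omega), coeff_pscomp_eval₂ hg f2 (by omega)]

lemma pscomp_one {g : PowerSeries ℝ} : pscomp 1 g = 1 := by
  ext n
  rw [coeff_pscomp]
  rw [Finset.sum_eq_single 0]
  · simp
  · intro k _ hk
    rw [PowerSeries.coeff_one, if_neg hk, zero_mul]
  · intro h; simp at h

lemma pscomp_pow {g : PowerSeries ℝ} (hg : PowerSeries.constantCoeff g = 0)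
    (f : PowerSeries ℝ) (k : ℕ) :
    pscomp (f ^ k) g = (pscomp f g) ^ k := by
  induction k with
  | zero => simpa using pscomp_one
  | succ m ih => rw [pow_succ, pscomp_mul hg, ih, pow_succ]

lemma pscomp_add (f1 f2 g : PowerSeries ℝ) :
    pscomp (f1 + f2) g = pscomp f1 g + pscomp f2 g := by
  ext n
  rw [map_add, coeff_pscomp, coeff_pscomp, coeff_pscomp, ← Finset.sum_add_distrib]
  apply Finset.sum_congr rfl
  intro k _
  rw [map_add, add_mul]

lemma pscomp_X {g : PowerSeries ℝ} (hg : PowerSeries.constantCoeff g = 0) :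
    pscomp PowerSeries.X g = g := by
  ext n
  rw [coeff_pscomp, Finset.sum_eq_single 1]
  · rw [PowerSeries.coeff_X, if_pos rfl, pow_one, one_mul]
  · intro k _ hk1
    rw [PowerSeries.coeff_X, if_neg hk1, zero_mul]
  · intro h
    have hn : n = 0 := by
      simp only [Finset.mem_range] at h; omega
    subst hn
    rw [PowerSeries.coeff_X, if_pos rfl, pow_one, one_mul,
      PowerSeries.coeff_zero_eq_constantCoeff, hg]

lemma pscomp_one_add_X {g : PowerSeries ℝ} (hg : PowerSeries.constantCoeff g = 0) :
    pscomp (1 + PowerSeries.X) g = 1 + g := by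
  rw [pscomp_add, pscomp_one, pscomp_X hg]

lemma dff_scale {lam : ℝ} (hlam : lam ≠ 0) (n : ℕ) (x : ℝ) :
    dff lam n x = lam ^ n * dff 1 n (x / lam) := by
  unfold dff
  have h : ∀ i ∈ range n, x - (i:ℝ) * lam = lam * (x/lam - i*1) := by
    intro i _; field_simp
  rw [Finset.prod_congr rfl h, Finset.prod_mul_distrib, Finset.prod_const, Finset.card_range]

lemma constantCoeff_degLog (lam : ℝ) : PowerSeries.constantCoeff (degLog lam) = 0 := by
  rw [← PowerSeries.coeff_zero_eq_constantCoeff]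
  simp [degLog]

lemma constantCoeff_B_sub_one (b : ℝ) : PowerSeries.constantCoeff (B b - 1) = 0 := by
  rw [← PowerSeries.coeff_zero_eq_constantCoeff]
  rw [map_sub, coeff_B]
  simp [dff]

lemma C_lam_mul_degLog {lam : ℝ} (hlam : lam ≠ 0) :
    PowerSeries.C lam * degLog lam = B lam - 1 := by
  ext n
  rw [PowerSeries.coeff_C_mul, map_sub, coeff_B, degLog, PowerSeries.coeff_mk, PowerSeries.coeff_one]
  cases n with
  | zero => simp [dff]
  | succ m =>
    rw [if_neg (Nat.succ_ne_zero m), if_neg (Nat.succ_ne_zero m)]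
    have h1 : dff (1/lam) (m+1) 1 = (1/lam) ^ (m+1) * dff 1 (m+1) lam := by
      rw [dff_scale (one_div_ne_zero hlam)]
      congr 1
      field_simp
    rw [sub_zero, h1, show m + 1 - 1 = m from rfl]
    have hf : ((m+1).factorial : ℝ) ≠ 0 := Nat.cast_ne_zero.mpr (Nat.factorial_ne_zero _)
    field_simp
    rw [show lam * lam ^ m * (1 / lam) ^ (m + 1) = (lam * lam⁻¹) * (lam * lam⁻¹) ^ m by ring,
      mul_inv_cancel₀ hlam, one_pow, one_mul, one_mul]

lemma pscomp_B_nat (N : ℕ) (b : ℝ) :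
    pscomp (B (N : ℝ)) (B b - 1) = B ((N : ℝ) * b) := by
  have hg := constantCoeff_B_sub_one b
  rw [B_nat, pscomp_pow hg, pscomp_one_add_X hg]
  rw [show (1 : PowerSeries ℝ) + (B b - 1) = B b by ring]
  exact B_pow b N

lemma pscomp_B (a b : ℝ) : pscomp (B a) (B b - 1) = B (a * b) := by
  ext n
  set Pl : Polynomial ℝ := ∑ k ∈ range (n+1),
    Polynomial.C ((PowerSeries.coeff n ((B b - 1 : PowerSeries ℝ)^k) / (k.factorial : ℝ) : ℝ)) * dffP 1 k with hPl
  set Pr : Polynomial ℝ := Polynomial.C ((n.factorial : ℝ))⁻¹ *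
    ∏ i ∈ range n, (Polynomial.C b * Polynomial.X - Polynomial.C ((i : ℝ) * 1)) with hPr
  have hevl : ∀ x : ℝ, Pl.eval x = PowerSeries.coeff n (pscomp (B x) (B b - 1)) := by
    intro x
    rw [hPl, Polynomial.eval_finset_sum, coeff_pscomp]
    apply Finset.sum_congr rfl
    intro k _
    rw [Polynomial.eval_mul, Polynomial.eval_C, dffP_eval, coeff_B]
    ring
  have hevr : ∀ x : ℝ, Pr.eval x = PowerSeries.coeff n (B (x * b)) := by
    intro x
    rw [hPr, Polynomial.eval_mul, Polynomial.eval_C, Polynomial.eval_prod, coeff_B]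
    unfold dff
    rw [div_eq_mul_inv, mul_comm]
    congr 1
    apply Finset.prod_congr rfl
    intro i _
    rw [Polynomial.eval_sub, Polynomial.eval_mul, Polynomial.eval_C, Polynomial.eval_X,
      Polynomial.eval_C]
    ring
  have hnat : ∀ N : ℕ, Pl.eval (N : ℝ) = Pr.eval (N : ℝ) := by
    intro N
    rw [hevl, hevr, pscomp_B_nat]
  have hinf : Set.Infinite {x : ℝ | Polynomial.eval x Pl = Polynomial.eval x Pr} :=
    (Set.infinite_range_of_injective (Nat.cast_injective : Function.Injective ((↑) : ℕ → ℝ))).mono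
      (by rintro x ⟨N, rfl⟩; exact hnat N)
  have hPlPr := Polynomial.eq_of_infinite_eval_eq Pl Pr hinf
  calc PowerSeries.coeff n (pscomp (B a) (B b - 1)) = Pl.eval a := (hevl a).symm
    _ = Pr.eval a := by rw [hPlPr]
    _ = PowerSeries.coeff n (B (a * b)) := hevr a

noncomputable def T (lam : ℝ) (n m : ℕ) : ℝ :=
  n.factorial * PowerSeries.coeff n ((degLog lam) ^ m) / m.factorial

lemma T_eq_zero (lam : ℝ) {n m : ℕ} (h : n < m) : T lam n m = 0 := by
  rw [T, coeff_pow_zero (constantCoeff_degLog lam) h, mul_zero, zero_div]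

lemma ff_expand {lam : ℝ} (hlam : lam ≠ 0) (n : ℕ) (x : ℝ) :
    dff 1 n x = ∑ l ∈ range (n+1), T lam n l * dff lam l x := by
  have hn : (n.factorial : ℝ) ≠ 0 := Nat.cast_ne_zero.mpr n.factorial_ne_zero
  have key := congrArg (PowerSeries.coeff n) (pscomp_B (x / lam) lam)
  rw [coeff_pscomp, coeff_B, div_mul_cancel₀ x hlam] at key
  have hpow : ∀ k : ℕ, PowerSeries.coeff n ((B lam - 1)^k)
      = lam ^ k * PowerSeries.coeff n ((degLog lam)^k) := by
    intro k
    rw [← C_lam_mul_degLog hlam, mul_pow, ← map_pow, PowerSeries.coeff_C_mul]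
  have hterm : ∀ k ∈ range (n+1),
      PowerSeries.coeff k (B (x/lam)) * PowerSeries.coeff n ((B lam - 1)^k)
      = (T lam n k * dff lam k x) / n.factorial := by
    intro k _
    rw [coeff_B, hpow, T, dff_scale hlam k x]
    have hk : (k.factorial : ℝ) ≠ 0 := Nat.cast_ne_zero.mpr k.factorial_ne_zero
    field_simp
  rw [Finset.sum_congr rfl hterm, ← Finset.sum_div] at key
  have key2 := congrArg (fun y : ℝ => y * (n.factorial : ℝ)) key
  simp only [div_mul_cancel₀ _ hn] at key2
  exact key2.symm

lemma indep (lam : ℝ) : ∀ (n : ℕ) (c : ℕ → ℝ),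
    (∀ x : ℝ, ∑ l ∈ range (n+1), c l * dff lam l x = 0) → ∀ l ≤ n, c l = 0 := by
  intro n
  induction n with
  | zero =>
    intro c h l hl
    interval_cases l
    simpa [dff] using h 0
  | succ m ih =>
    intro c h
    have hP : (∑ l ∈ range (m+2), Polynomial.C (c l) * dffP lam l) = 0 := by
      apply Polynomial.funext
      intro x
      rw [Polynomial.eval_finset_sum, Polynomial.eval_zero]
      rw [Finset.sum_congr rfl (fun l _ => by rw [Polynomial.eval_mul, Polynomial.eval_C, dffP_eval])]
      exact h x
    have htop : c (m+1) = 0 := by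
      have hc := congrArg (fun P => Polynomial.coeff P (m+1)) hP
      simp only [Polynomial.finset_sum_coeff, Polynomial.coeff_zero] at hc
      rw [Finset.sum_eq_single (m+1)] at hc
      · rw [Polynomial.coeff_C_mul] at hc
        have hone : (dffP lam (m+1)).coeff (m+1) = 1 := by
          have hm := (dffP_monic lam (m+1)).coeff_natDegree
          rwa [dffP_natDegree] at hm
        rw [hone, mul_one] at hc
        exact hc
      · intro l hl hlm
        rw [Polynomial.coeff_C_mul]
        have hz : (dffP lam l).coeff (m+1) = 0 := by
          apply Polynomial.coeff_eq_zero_of_natDegree_lt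
          rw [dffP_natDegree]
          have : l < m + 2 := Finset.mem_range.mp hl
          omega
        rw [hz, mul_zero]
      · intro habs
        exact absurd (Finset.self_mem_range_succ (m+1)) habs
    have hrest : ∀ x : ℝ, ∑ l ∈ range (m+1), c l * dff lam l x = 0 := by
      intro x
      have hx := h x
      rw [Finset.sum_range_succ, htop, zero_mul, add_zero] at hx
      exact hx
    intro l hl
    by_cases hcase : l = m + 1
    · rw [hcase]; exact htop
    · exact ih c hrest l (by omega)

lemma S1_eq_T {lam : ℝ} (hlam : lam ≠ 0) (S1 : ℕ → ℕ → ℝ)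
    (hS1 : ∀ (n : ℕ) (x : ℝ), dff 1 n x = ∑ l ∈ Finset.range (n + 1), S1 n l * dff lam l x)
    (n : ℕ) : ∀ l ≤ n, S1 n l = T lam n l := by
  have h := indep lam n (fun l => S1 n l - T lam n l) (by
    intro x
    rw [Finset.sum_congr rfl (fun l _ => sub_mul (S1 n l) (T lam n l) (dff lam l x)),
      Finset.sum_sub_distrib, ← hS1 n x, ← ff_expand hlam n x, sub_self])
  intro l hl
  have h0 : S1 n l - T lam n l = 0 := h l hl
  linarith

end JS

theorem jindalrae_stirling_first_kind (lam : ℝ) (hlam : lam ≠ 0)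
    (S1 SJ1 : ℕ → ℕ → ℝ)
    (hS1 : ∀ (n : ℕ) (x : ℝ), dff 1 n x = ∑ l ∈ Finset.range (n + 1), S1 n l * dff lam l x)
    (hSJ1 : ∀ k : ℕ, (PowerSeries.C ((k.factorial : ℝ))⁻¹) * (pscomp (degLog lam) (degLog lam)) ^ k = PowerSeries.mk (fun n => if k ≤ n then SJ1 n k / n.factorial else 0))
    : ∀ n k : ℕ, k ≤ n → SJ1 n k = ∑ m ∈ Finset.Icc k n, S1 n m * S1 m k := by
  intro n k hkn
  have hgL := JS.constantCoeff_degLog lam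
  have hn : (n.factorial : ℝ) ≠ 0 := Nat.cast_ne_zero.mpr n.factorial_ne_zero
  have h := congrArg (PowerSeries.coeff n) (hSJ1 k)
  rw [PowerSeries.coeff_C_mul, PowerSeries.coeff_mk, if_pos hkn,
    ← JS.pscomp_pow hgL (degLog lam) k, JS.coeff_pscomp] at h
  have hSJ : SJ1 n k = ((k.factorial : ℝ))⁻¹ * (∑ m ∈ range (n+1),
      PowerSeries.coeff m ((degLog lam)^k) * PowerSeries.coeff n ((degLog lam)^m))
      * (n.factorial : ℝ) := (div_eq_iff hn).mp h.symm
  have hT : SJ1 n k = ∑ m ∈ range (n+1), JS.T lam n m * JS.T lam m k := by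
    rw [hSJ, mul_comm, ← mul_assoc, Finset.mul_sum]
    apply Finset.sum_congr rfl
    intro m _
    rw [JS.T, JS.T]
    have hm : (m.factorial : ℝ) ≠ 0 := Nat.cast_ne_zero.mpr m.factorial_ne_zero
    have hk : (k.factorial : ℝ) ≠ 0 := Nat.cast_ne_zero.mpr k.factorial_ne_zero
    field_simp
  have hIcc : (∑ m ∈ range (n+1), JS.T lam n m * JS.T lam m k)
      = ∑ m ∈ Finset.Icc k n, JS.T lam n m * JS.T lam m k := by
    symm
    apply Finset.sum_subset
    · intro m hm
      rw [Finset.mem_Icc] at hm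
      rw [Finset.mem_range]
      omega
    · intro m hm hnot
      rw [Finset.mem_range] at hm
      rw [Finset.mem_Icc] at hnot
      have hmk : m < k := by omega
      rw [JS.T_eq_zero lam hmk, mul_zero]
  rw [hT, hIcc]
  apply Finset.sum_congr rfl
  intro m hm
  rw [Finset.mem_Icc] at hm
  rw [JS.S1_eq_T hlam S1 hS1 n m hm.2, JS.S1_eq_T hlam S1 hS1 m k hm.1]
end

section
/- Fix a real number λ ≠ 0. For every integer n ≥ 1, S_{1,λ}(n,1) = Σ_{k=1}^{n} (1)_{k,λ} S^{(1)}_{J,λ}(n,k). -/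
open Finset

namespace JD

open PowerSeries

lemma coeff_pow_eq_zero {g : PowerSeries ℝ} (hg : constantCoeff g = 0) :
    ∀ j k, k < j → coeff k (g ^ j) = 0 := by
  intro j
  induction j with
  | zero => intro k h; omega
  | succ j ih =>
    intro k hk
    rw [pow_succ, coeff_mul]
    apply Finset.sum_eq_zero
    rintro ⟨a, b⟩ hab
    rw [Finset.HasAntidiagonal.mem_antidiagonal] at hab
    by_cases hb : b = 0
    · subst hb
      simp only [coeff_zero_eq_constantCoeff, hg, mul_zero]
    · rw [ih a (by omega), zero_mul]

lemma coeff_eval₂ {g : PowerSeries ℝ} (hg : constantCoeff g = 0)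
    (P : Polynomial ℝ) (n : ℕ) :
    coeff n (P.eval₂ C g)
      = ∑ k ∈ range (n + 1), P.coeff k * coeff n (g ^ k) := by
  set N := max (n + 1) (P.natDegree + 1) with hN
  rw [Polynomial.eval₂_eq_sum_range' C (lt_of_lt_of_le (Nat.lt_succ_self _) (le_max_right _ _)) g,
    map_sum]
  have h1 : ∀ k ∈ range N, coeff n (C (P.coeff k) * g ^ k)
      = P.coeff k * coeff n (g ^ k) := fun k _ => coeff_C_mul n (g ^ k) (P.coeff k)
  rw [Finset.sum_congr rfl h1]
  symm
  apply Finset.sum_subset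
  · exact Finset.range_subset_range.2 (le_max_left _ _)
  · intro k hk hk'
    rw [Finset.mem_range] at hk hk'
    rw [coeff_pow_eq_zero hg k n (by omega), mul_zero]

lemma coeff_pscomp (f g : PowerSeries ℝ) (n : ℕ) :
    coeff n (pscomp f g) = ∑ k ∈ range (n + 1), coeff k f * coeff n (g ^ k) := by
  simp [pscomp, coeff_mk]

lemma coeff_pscomp_eval₂ {g : PowerSeries ℝ} (hg : constantCoeff g = 0)
    (f : PowerSeries ℝ) {n N : ℕ} (hN : n < N) :
    coeff n (pscomp f g) = coeff n ((trunc N f).eval₂ C g) := by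
  rw [coeff_eval₂ hg, coeff_pscomp]
  apply Finset.sum_congr rfl
  intro k hk
  rw [Finset.mem_range] at hk
  rw [coeff_trunc, if_pos (by omega)]
lemma pscomp_mul {g : PowerSeries ℝ} (hg : constantCoeff g = 0) (f h : PowerSeries ℝ) :
    pscomp (f * h) g = pscomp f g * pscomp h g := by
  ext n
  have key : coeff n (pscomp (f * h) g)
      = coeff n ((trunc (n+1) f * trunc (n+1) h).eval₂ C g) := by
    rw [coeff_eval₂ hg, coeff_pscomp]
    apply Finset.sum_congr rfl
    intro k hk
    rw [Finset.mem_range] at hk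
    congr 1
    rw [Polynomial.coeff_mul, coeff_mul]
    apply Finset.sum_congr rfl
    rintro ⟨a, b⟩ hab
    rw [Finset.HasAntidiagonal.mem_antidiagonal] at hab
    rw [coeff_trunc, coeff_trunc, if_pos (by omega), if_pos (by omega)]
  rw [key, Polynomial.eval₂_mul, coeff_mul, coeff_mul]
  apply Finset.sum_congr rfl
  rintro ⟨a, b⟩ hab
  rw [Finset.HasAntidiagonal.mem_antidiagonal] at hab
  rw [← coeff_pscomp_eval₂ hg f (n := a) (N := n+1) (by omega),
    ← coeff_pscomp_eval₂ hg h (n := b) (N := n+1) (by omega)]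

lemma pscomp_one (g : PowerSeries ℝ) : pscomp 1 g = 1 := by
  ext n
  rw [coeff_pscomp]
  rw [Finset.sum_eq_single 0]
  · simp
  · intro k hk hk0
    rw [coeff_one, if_neg hk0, zero_mul]
  · intro h; exact absurd (Finset.mem_range.2 (Nat.succ_pos n)) h

lemma pscomp_C (g : PowerSeries ℝ) (a : ℝ) : pscomp (C a) g = C a := by
  ext n
  rw [coeff_pscomp]
  rw [Finset.sum_eq_single 0]
  · simp [coeff_C]
  · intro k hk hk0
    rw [coeff_C, if_neg hk0, zero_mul]
  · intro h; exact absurd (Finset.mem_range.2 (Nat.succ_pos n)) h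

lemma pscomp_X {g : PowerSeries ℝ} (hg : constantCoeff g = 0) : pscomp X g = g := by
  ext n
  rw [coeff_pscomp]
  rcases Nat.eq_zero_or_pos n with hn | hn
  · subst hn
    simp [coeff_zero_eq_constantCoeff, hg]
  · rw [Finset.sum_eq_single 1]
    · simp
    · intro k hk hk1
      rw [coeff_X, if_neg hk1, zero_mul]
    · intro h; exact absurd (Finset.mem_range.2 (by omega)) h

lemma pscomp_add (g f h : PowerSeries ℝ) :
    pscomp (f + h) g = pscomp f g + pscomp h g := by
  ext n
  rw [map_add, coeff_pscomp, coeff_pscomp, coeff_pscomp, ← Finset.sum_add_distrib]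
  apply Finset.sum_congr rfl
  intro k _
  rw [map_add, add_mul]

lemma pscomp_pow {g : PowerSeries ℝ} (hg : constantCoeff g = 0) (f : PowerSeries ℝ) (j : ℕ) :
    pscomp (f ^ j) g = (pscomp f g) ^ j := by
  induction j with
  | zero => simpa using pscomp_one g
  | succ j ih => rw [pow_succ, pow_succ, pscomp_mul hg, ih]

lemma constantCoeff_pscomp (f g : PowerSeries ℝ) :
    constantCoeff (pscomp f g) = constantCoeff f := by
  rw [← coeff_zero_eq_constantCoeff, coeff_pscomp]
  simp

lemma pscomp_assoc {g h : PowerSeries ℝ} (hg : constantCoeff g = 0)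
    (hh : constantCoeff h = 0) (f : PowerSeries ℝ) :
    pscomp f (pscomp g h) = pscomp (pscomp f g) h := by
  ext n
  rw [coeff_pscomp, coeff_pscomp]
  have lhs : ∀ j, coeff n ((pscomp g h) ^ j) = ∑ k ∈ range (n+1), coeff k (g ^ j) * coeff n (h ^ k) := by
    intro j
    rw [← pscomp_pow hh g j, coeff_pscomp]
  calc ∑ j ∈ range (n+1), coeff j f * coeff n ((pscomp g h) ^ j)
      = ∑ j ∈ range (n+1), ∑ k ∈ range (n+1), coeff j f * (coeff k (g ^ j) * coeff n (h ^ k)) := by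
        apply Finset.sum_congr rfl
        intro j _
        rw [lhs j, Finset.mul_sum]
    _ = ∑ k ∈ range (n+1), ∑ j ∈ range (n+1), coeff j f * (coeff k (g ^ j) * coeff n (h ^ k)) :=
        Finset.sum_comm
    _ = ∑ k ∈ range (n+1), coeff k (pscomp f g) * coeff n (h ^ k) := by
        apply Finset.sum_congr rfl
        intro k hk
        rw [Finset.mem_range] at hk
        rw [coeff_pscomp, Finset.sum_mul]
        simp only [mul_assoc]
        symm
        apply Finset.sum_subset
        · exact Finset.range_subset_range.2 (by omega)
        · intro j hj hj'
          rw [Finset.mem_range] at hj hj'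
          rw [coeff_pow_eq_zero hg j k (by omega)]
          ring
lemma deriv_eval₂ (g : PowerSeries ℝ) (P : Polynomial ℝ) :
    d⁄dX ℝ (P.eval₂ C g) = (Polynomial.derivative P).eval₂ C g * d⁄dX ℝ g := by
  induction P using Polynomial.induction_on' with
  | add p q hp hq =>
    rw [Polynomial.eval₂_add, map_add, hp, hq, Polynomial.derivative_add, Polynomial.eval₂_add,
      add_mul]
  | monomial k a =>
    rw [Polynomial.eval₂_monomial, Polynomial.derivative_monomial, Polynomial.eval₂_monomial]
    rw [Derivation.leibniz, Derivation.leibniz_pow, derivative_C]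
    simp only [smul_eq_mul, smul_zero, add_zero, nsmul_eq_mul]
    rw [map_mul, map_natCast]
    ring

lemma pscomp_deriv {g : PowerSeries ℝ} (hg : constantCoeff g = 0) (f : PowerSeries ℝ) :
    d⁄dX ℝ (pscomp f g) = pscomp (d⁄dX ℝ f) g * d⁄dX ℝ g := by
  ext n
  rw [coeff_derivative, coeff_pscomp_eval₂ hg f (n := n+1) (N := n+2) (by omega),
    ← coeff_derivative, deriv_eval₂]
  rw [coeff_mul, coeff_mul]
  apply Finset.sum_congr rfl
  rintro ⟨a, b⟩ hab
  rw [Finset.HasAntidiagonal.mem_antidiagonal] at hab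
  congr 1
  rw [coeff_eval₂ hg, coeff_pscomp]
  apply Finset.sum_congr rfl
  intro k hk
  rw [Finset.mem_range] at hk
  rw [Polynomial.coeff_derivative, coeff_trunc, if_pos (by omega), coeff_derivative]
lemma dff_succ (lam x : ℝ) (n : ℕ) : dff lam (n+1) x = dff lam n x * (x - n * lam) :=
  Finset.prod_range_succ _ _

lemma constantCoeff_degLog (lam : ℝ) : constantCoeff (degLog lam) = 0 := by
  rw [← coeff_zero_eq_constantCoeff]
  simp [degLog]

lemma ode_E (lam : ℝ) :
    (1 + C lam * X) * d⁄dX ℝ (degExp lam 1) = degExp lam 1 := by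
  ext n
  rw [add_mul, one_mul, map_add, mul_assoc, coeff_C_mul]
  rcases n with _ | m
  · rw [coeff_zero_X_mul, coeff_derivative]
    simp [degExp, dff]
  · rw [coeff_succ_X_mul, coeff_derivative, coeff_derivative]
    simp only [degExp, coeff_mk]
    rw [show m + 1 + 1 = (m+1) + 1 from rfl, dff_succ lam 1 (m+1), Nat.factorial_succ (m+1)]
    have h1 : ((m+1).factorial : ℝ) ≠ 0 := Nat.cast_ne_zero.2 (Nat.factorial_ne_zero _)
    push_cast
    field_simp
    ring

lemma ode_L (lam : ℝ) (hlam : lam ≠ 0) :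
    (1 + X) * d⁄dX ℝ (degLog lam) = C lam * degLog lam + 1 := by
  ext n
  rw [add_mul, one_mul, map_add, map_add, coeff_C_mul]
  rcases n with _ | m
  · rw [coeff_zero_X_mul, coeff_derivative]
    simp [degLog, dff]
  · rw [coeff_succ_X_mul, coeff_derivative, coeff_derivative]
    simp only [degLog, coeff_mk, coeff_one, if_neg (Nat.succ_ne_zero m), add_zero,
      Nat.succ_ne_zero, if_false, Nat.add_sub_cancel]
    rw [show m + 1 + 1 = (m+1) + 1 from rfl, dff_succ (1/lam) 1 (m+1), Nat.factorial_succ (m+1)]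
    have h1 : ((m+1).factorial : ℝ) ≠ 0 := Nat.cast_ne_zero.2 (Nat.factorial_ne_zero _)
    push_cast
    field_simp
    ring
lemma ode_unique {F : PowerSeries ℝ} (hode : (1 + X) * d⁄dX ℝ F = F)
    (hc : constantCoeff F = 1) : F = 1 + X := by
  have hrec : ∀ n : ℕ, coeff n (d⁄dX ℝ F) + coeff n (X * d⁄dX ℝ F) = coeff n F := by
    intro n
    rw [← map_add, show d⁄dX ℝ F + X * d⁄dX ℝ F = (1 + X) * d⁄dX ℝ F by ring, hode]
  have h0 : coeff 0 F = 1 := by rw [coeff_zero_eq_constantCoeff, hc]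
  have h1 : coeff 1 F = 1 := by
    have := hrec 0
    rw [coeff_zero_X_mul, add_zero, coeff_derivative] at this
    rw [coeff_zero_eq_constantCoeff, hc] at this
    push_cast at this
    linarith
  have hstep : ∀ m : ℕ, coeff (m+2) F * ((m:ℝ)+2) + coeff (m+1) F * ((m:ℝ)+1)
      = coeff (m+1) F := by
    intro m
    have := hrec (m+1)
    rw [coeff_succ_X_mul, coeff_derivative, coeff_derivative] at this
    push_cast at this
    convert this using 2 <;> push_cast <;> ring
  have hzero : ∀ m : ℕ, coeff (m+2) F = 0 := by
    intro m
    induction m with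
    | zero =>
      have := hstep 0
      rw [h1] at this
      push_cast at this
      nlinarith [this]
    | succ k ih =>
      have := hstep (k+1)
      rw [ih] at this
      have hk : ((k:ℝ)+1+2) ≠ 0 := by positivity
      push_cast at this
      nlinarith [this]
  ext n
  rcases n with _ | _ | m
  · simpa using h0
  · simp only [map_add, coeff_one, coeff_X]
    norm_num [h1]
  · rw [hzero m]
    simp [coeff_one, coeff_X]

lemma EL_eq (lam : ℝ) (hlam : lam ≠ 0) :
    pscomp (degExp lam 1) (degLog lam) = 1 + X := by
  have hL0 : constantCoeff (degLog lam) = 0 := constantCoeff_degLog lam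
  set L := degLog lam with hL
  set E := degExp lam 1 with hE
  have hFc : constantCoeff (pscomp E L) = 1 := by
    rw [constantCoeff_pscomp, ← coeff_zero_eq_constantCoeff]
    simp [hE, degExp, dff]
  have step1 : (1 + C lam * L) * pscomp (d⁄dX ℝ E) L = pscomp E L := by
    have := congrArg (fun f => pscomp f L) (ode_E lam)
    simp only [hE] at this ⊢
    rw [pscomp_mul hL0, pscomp_add, pscomp_one, pscomp_mul hL0, pscomp_C, pscomp_X hL0] at this
    exact this
  have step2 : (1 + X) * d⁄dX ℝ L = C lam * L + 1 := ode_L lam hlam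
  apply ode_unique _ hFc
  rw [pscomp_deriv hL0]
  calc (1 + X) * (pscomp (d⁄dX ℝ E) L * d⁄dX ℝ L)
      = pscomp (d⁄dX ℝ E) L * ((1 + X) * d⁄dX ℝ L) := by ring
    _ = pscomp (d⁄dX ℝ E) L * (C lam * L + 1) := by rw [step2]
    _ = (1 + C lam * L) * pscomp (d⁄dX ℝ E) L := by ring
    _ = pscomp E L := step1

lemma EMM_eq (lam : ℝ) (hlam : lam ≠ 0) :
    pscomp (degExp lam 1) (pscomp (degLog lam) (degLog lam)) = 1 + degLog lam := by
  have hL0 : constantCoeff (degLog lam) = 0 := constantCoeff_degLog lam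
  rw [pscomp_assoc hL0 hL0, EL_eq lam hlam, pscomp_add, pscomp_one, pscomp_X hL0]
lemma dff_scale (lam : ℝ) (hlam : lam ≠ 0) (n : ℕ) :
    dff 1 n lam = lam ^ n * dff (1 / lam) n 1 := by
  rw [dff, dff, ← Finset.card_range n, ← Finset.prod_const lam, Finset.card_range,
    ← Finset.prod_mul_distrib]
  apply Finset.prod_congr rfl
  intro i _
  field_simp

end JD

open JD PowerSeries

theorem stirling1_at_one_via_jindalrae1 (lam : ℝ) (hlam : lam ≠ 0)
    (S1 SJ1 : ℕ → ℕ → ℝ)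
    (hS1 : ∀ (n : ℕ) (x : ℝ), dff 1 n x = ∑ l ∈ Finset.range (n + 1), S1 n l * dff lam l x)
    (hSJ1 : ∀ k : ℕ, (PowerSeries.C ((k.factorial : ℝ))⁻¹) * (pscomp (degLog lam) (degLog lam)) ^ k = PowerSeries.mk (fun n => if k ≤ n then SJ1 n k / n.factorial else 0))
    : ∀ n : ℕ, 1 ≤ n → S1 n 1 = ∑ k ∈ Finset.Icc 1 n, dff lam k 1 * SJ1 n k := by
  intro n hn
  -- Step 1 : S1 n 1 = dff 1 n lam / lam
  have hdff0 : ∀ (a : ℝ) (l : ℕ), 1 ≤ l → dff a l 0 = 0 := by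
    intro a l hl
    apply Finset.prod_eq_zero (Finset.mem_range.2 hl : (0:ℕ) ∈ range l)
    simp
  have hdffl : ∀ l : ℕ, 2 ≤ l → dff lam l lam = 0 := by
    intro l hl
    apply Finset.prod_eq_zero (Finset.mem_range.2 (by omega) : (1:ℕ) ∈ range l)
    simp
  have h0 : S1 n 0 = 0 := by
    have h := hS1 n 0
    rw [hdff0 1 n hn, Finset.sum_eq_single 0] at h
    · simpa [dff] using h.symm
    · intro l hl hl0
      rw [hdff0 lam l (by omega), mul_zero]
    · intro h'; exact absurd (Finset.mem_range.2 (by omega)) h'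
  have h1 : S1 n 1 = dff 1 n lam / lam := by
    have h := hS1 n lam
    have hsub : ({0, 1} : Finset ℕ) ⊆ range (n + 1) := by
      intro x hx
      simp only [Finset.mem_insert, Finset.mem_singleton] at hx
      rcases hx with rfl | rfl <;> exact Finset.mem_range.2 (by omega)
    rw [← Finset.sum_subset hsub (by
      intro l hl hl'
      simp only [Finset.mem_insert, Finset.mem_singleton] at hl'
      push_neg at hl'
      rw [hdffl l (by omega), mul_zero])] at h
    rw [Finset.sum_pair (by norm_num : (0:ℕ) ≠ 1)] at h
    have hd0 : dff lam 0 lam = 1 := by simp [dff]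
    have hd1 : dff lam 1 lam = lam := by simp [dff]
    rw [hd0, hd1, h0] at h
    rw [h]
    field_simp
    ring
  -- Step 2 : value of SJ1 from hSJ1
  set M := pscomp (degLog lam) (degLog lam) with hM
  have hnfac : ((n.factorial : ℝ)) ≠ 0 := Nat.cast_ne_zero.2 (Nat.factorial_ne_zero _)
  have hSJval : ∀ k ∈ Finset.Icc 1 n,
      SJ1 n k = (n.factorial : ℝ) * (((k.factorial : ℝ))⁻¹ * coeff n (M ^ k)) := by
    intro k hk
    rw [Finset.mem_Icc] at hk
    have h := congrArg (coeff n) (hSJ1 k)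
    rw [coeff_C_mul, coeff_mk, if_pos hk.2] at h
    rw [eq_comm, div_eq_iff hnfac] at h
    rw [h]
    ring
  -- Step 3 : coefficient identity from EMM_eq
  have hL0 : constantCoeff (degLog lam) = 0 := constantCoeff_degLog lam
  have hkey : ∑ k ∈ range (n + 1), (dff lam k 1 / k.factorial) * coeff n (M ^ k)
      = lam ^ (n - 1) * dff (1 / lam) n 1 / n.factorial := by
    have h := congrArg (coeff n) (EMM_eq lam hlam)
    rw [coeff_pscomp] at h
    simp only [degExp, coeff_mk] at h
    rw [map_add, coeff_one, if_neg (by omega), zero_add] at h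
    rw [h, degLog, coeff_mk, if_neg (by omega)]
  -- Step 4 : assemble
  have hsplit : range (n + 1) = insert 0 (Finset.Icc 1 n) := by
    ext x
    simp only [Finset.mem_range, Finset.mem_insert, Finset.mem_Icc]
    omega
  rw [hsplit, Finset.sum_insert (by simp)] at hkey
  have hzeroterm : (dff lam 0 1 / (Nat.factorial 0 : ℝ)) * coeff n (M ^ 0) = 0 := by
    rw [pow_zero, coeff_one, if_neg (by omega), mul_zero]
  rw [hzeroterm, zero_add] at hkey
  have hRHS : ∑ k ∈ Finset.Icc 1 n, dff lam k 1 * SJ1 n k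
      = (n.factorial : ℝ) * ∑ k ∈ Finset.Icc 1 n, (dff lam k 1 / k.factorial) * coeff n (M ^ k) := by
    rw [Finset.mul_sum]
    apply Finset.sum_congr rfl
    intro k hk
    rw [hSJval k hk]
    field_simp
  rw [hRHS, hkey, h1, dff_scale lam hlam n]
  rw [show n = (n - 1) + 1 from by omega, pow_succ]
  field_simp
  ring
  rw [show 1 + (n - 1) - 1 = n - 1 by omega]
end

section
/- Fix a real number λ ≠ 0. For every integer n ≥ 0 and every real x, the Jindalrae polynomial satisfies J_{n,λ}(x) = Σ_{k=0}^{n} (x)_{k,λ} S^{(2)}_{J,λ}(n,k); in particular J_{n,λ} = Σ_{k=0}^{n} (1)_{k,λ} S^{(2)}_{J,λ}(n,k). -/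
open Finset

theorem jindalrae_polynomial_expansion (lam : ℝ) (hlam : lam ≠ 0)
    (SJ2 : ℕ → ℕ → ℝ) (J : ℕ → ℝ → ℝ)
    (hSJ2 : ∀ k : ℕ, (PowerSeries.C ((k.factorial : ℝ))⁻¹) * (pscomp (degExp lam 1) (degExp lam 1 - 1) - 1) ^ k = PowerSeries.mk (fun n => if k ≤ n then SJ2 n k / n.factorial else 0))
    (hJ : ∀ x : ℝ, pscomp (degExp lam x) (pscomp (degExp lam 1) (degExp lam 1 - 1) - 1) = PowerSeries.mk (fun n => J n x / n.factorial))
    : ∀ (n : ℕ) (x : ℝ), J n x = ∑ k ∈ Finset.range (n + 1), dff lam k x * SJ2 n k := by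
  intro n x
  set g := pscomp (degExp lam 1) (degExp lam 1 - 1) - 1 with hgdef
  have hn : (n.factorial : ℝ) ≠ 0 := Nat.cast_ne_zero.mpr n.factorial_ne_zero
  have hg : ∀ k, (PowerSeries.coeff n) (g ^ k)
      = if k ≤ n then (k.factorial : ℝ) * (SJ2 n k / n.factorial) else 0 := by
    intro k
    have hk : (k.factorial : ℝ) ≠ 0 := Nat.cast_ne_zero.mpr k.factorial_ne_zero
    have h := congrArg (PowerSeries.coeff n) (hSJ2 k)
    rw [PowerSeries.coeff_C_mul, PowerSeries.coeff_mk] at h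
    field_simp at h ⊢
    rw [h]
    split <;> ring
  have h1 := congrArg (PowerSeries.coeff n) (hJ x)
  rw [show pscomp (degExp lam x) g = PowerSeries.mk fun m =>
      ∑ k ∈ Finset.range (m + 1), (PowerSeries.coeff k (degExp lam x)) * (PowerSeries.coeff m (g ^ k)) from rfl] at h1
  rw [PowerSeries.coeff_mk, PowerSeries.coeff_mk] at h1
  have h2 : ∑ k ∈ Finset.range (n + 1),
      (PowerSeries.coeff k (degExp lam x)) * (PowerSeries.coeff n (g ^ k))
      = (∑ k ∈ Finset.range (n + 1), dff lam k x * SJ2 n k) / n.factorial := by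
    rw [Finset.sum_div]
    refine Finset.sum_congr rfl fun k hk => ?_
    have hkn : k ≤ n := Nat.lt_succ_iff.mp (Finset.mem_range.mp hk)
    have hkf : (k.factorial : ℝ) ≠ 0 := Nat.cast_ne_zero.mpr k.factorial_ne_zero
    rw [hg k, if_pos hkn, degExp, PowerSeries.coeff_mk]
    field_simp
  rw [h2] at h1
  field_simp at h1
  linarith [h1]
end
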